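/- arXiv:2012.04601 — 7 statements merged into one kernel-verified Lean document; each statement's English description precedes it below -/
import Mathlib

section
/- Let M be an n×n real matrix, let D be the diagonal matrix with the same diagonal entries as M, and for a real number t let M_t = M + (t − 1)·D (so the diagonal of M is scaled by t and the off-diagonal entries are unchanged). Then for every index i ≤ n there exists a real polynomial P_i of degree at most n − i such that for all real t, the coefficient of x^i in the characteristic polynomial of M_t equals P_i evaluated at t. -/
open Matrix Polynomial

/-- Weighted degree predicate: every coefficient of `p` (a polynomial in `x`
over `ℝ[t]`) is either zero or has `t`-degree plus `x`-exponent at most `m`. -/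
def Wdeg (m : ℕ) (p : Polynomial (Polynomial ℝ)) : Prop :=
  ∀ k, (p.coeff k).natDegree + k ≤ m ∨ p.coeff k = 0

lemma Wdeg_zero (m : ℕ) : Wdeg m 0 := fun k => Or.inr (by simp)

lemma Wdeg_one : Wdeg 0 1 := by
  intro k
  rcases Nat.eq_zero_or_pos k with h | h
  · subst h; left; simp
  · right; simp [Polynomial.coeff_one, Nat.pos_iff_ne_zero.mp h]

lemma Wdeg_add {a : ℕ} {p q : Polynomial (Polynomial ℝ)}
    (hp : Wdeg a p) (hq : Wdeg a q) : Wdeg a (p + q) := by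
  intro k
  rcases hp k with h1 | h1 <;> rcases hq k with h2 | h2
  · left
    rw [Polynomial.coeff_add]
    have := Polynomial.natDegree_add_le (p.coeff k) (q.coeff k)
    omega
  · left; rw [Polynomial.coeff_add, h2, add_zero]; exact h1
  · left; rw [Polynomial.coeff_add, h1, zero_add]; exact h2
  · right; rw [Polynomial.coeff_add, h1, h2, add_zero]

lemma Wdeg_mul {a b : ℕ} {p q : Polynomial (Polynomial ℝ)}
    (hp : Wdeg a p) (hq : Wdeg b q) : Wdeg (a + b) (p * q) := by
  intro k
  by_cases hk : k ≤ a + b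
  · left
    rw [Polynomial.coeff_mul]
    have : ((Finset.HasAntidiagonal.antidiagonal k).sum
        (fun x => p.coeff x.1 * q.coeff x.2)).natDegree ≤ a + b - k := by
      apply Polynomial.natDegree_sum_le_of_forall_le
      rintro ⟨x, y⟩ hxy
      simp only [Finset.HasAntidiagonal.mem_antidiagonal] at hxy
      show (p.coeff x * q.coeff y).natDegree ≤ a + b - k
      rcases hp x with h1 | h1
      · rcases hq y with h2 | h2
        · have := Polynomial.natDegree_mul_le (p := p.coeff x) (q := q.coeff y)
          omega
        · simp [h2]
      · simp [h1]
    omega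
  · right
    rw [Polynomial.coeff_mul]
    apply Finset.sum_eq_zero
    rintro ⟨x, y⟩ hxy
    simp only [Finset.HasAntidiagonal.mem_antidiagonal] at hxy
    rcases hp x with h1 | h1
    · rcases hq y with h2 | h2
      · omega
      · simp [h2]
    · simp [h1]

lemma Wdeg_prod {ι : Type*} (s : Finset ι) (f : ι → Polynomial (Polynomial ℝ))
    (h : ∀ j ∈ s, Wdeg 1 (f j)) : Wdeg s.card (∏ j ∈ s, f j) := by
  classical
  induction s using Finset.induction_on with
  | empty => simpa using Wdeg_one
  | @insert x s hx ih =>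
    rw [Finset.prod_insert hx, Finset.card_insert_of_notMem hx, add_comm]
    exact Wdeg_mul (h x (Finset.mem_insert_self x s))
      (ih fun j hj => h j (Finset.mem_insert_of_mem hj))

lemma Wdeg_zsmul {a : ℕ} {p : Polynomial (Polynomial ℝ)} (z : ℤ)
    (hp : Wdeg a p) : Wdeg a (z • p) := by
  intro k
  rcases hp k with h | h
  · left
    rw [Polynomial.coeff_smul]
    have h2 : (z • p.coeff k).natDegree ≤ (p.coeff k).natDegree := by
      rw [zsmul_eq_mul]
      exact Polynomial.natDegree_mul_le.trans (by simp)
    omega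
  · right; rw [Polynomial.coeff_smul, h, smul_zero]

theorem stmt_0 (n : ℕ) (M : Matrix (Fin n) (Fin n) ℝ)
    (D : Matrix (Fin n) (Fin n) ℝ) (hD : D = Matrix.diagonal (fun i => M i i)) :
    ∀ i ≤ n, ∃ P : Polynomial ℝ, P.natDegree ≤ n - i ∧
      ∀ t : ℝ, (M + (t - 1) • D).charpoly.coeff i = P.eval t := by
  classical
  intro i hi
  -- the matrix over ℝ[t]
  set N : Matrix (Fin n) (Fin n) (Polynomial ℝ) :=
    fun a b => if a = b then (X : Polynomial ℝ) * C (M a a) else C (M a b) with hN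
  -- weighted degree of the charpoly
  have hent : ∀ a b, Wdeg 1 (Matrix.charmatrix N a b) := by
    intro a b
    by_cases hab : a = b
    · subst hab
      rw [Matrix.charmatrix_apply_eq]
      intro k
      match k with
      | 0 =>
        left
        have : ((X - C (N a a)).coeff 0) = -(X * C (M a a)) := by
          simp [hN]
        rw [this]
        simp [Polynomial.natDegree_neg]
        exact Polynomial.natDegree_mul_le.trans (by simp)
      | 1 => left; simp
      | (k+2) => right; simp [Polynomial.coeff_X, Polynomial.coeff_C]
    · rw [Matrix.charmatrix_apply_ne _ _ _ hab]
      intro k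
      match k with
      | 0 => left; simp [hN, hab]
      | (k+1) => right; simp
  have hW : Wdeg n N.charpoly := by
    rw [Matrix.charpoly, Matrix.det_apply]
    have : ∀ σ ∈ (Finset.univ : Finset (Equiv.Perm (Fin n))),
        Wdeg n (Equiv.Perm.sign σ • ∏ j, Matrix.charmatrix N (σ j) j) := by
      intro σ _
      have := Wdeg_prod Finset.univ (fun j => Matrix.charmatrix N (σ j) j)
        (fun j _ => hent (σ j) j)
      simp only [Finset.card_univ, Fintype.card_fin] at this
      exact Wdeg_zsmul _ this
    exact Finset.sum_induction _ _ (fun p q => Wdeg_add) (Wdeg_zero n) this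
  refine ⟨N.charpoly.coeff i, ?_, ?_⟩
  · rcases hW i with h | h
    · omega
    · simp [h]
  · intro t
    have hmap : N.map (Polynomial.evalRingHom t) = M + (t - 1) • D := by
      ext a b
      rw [Matrix.map_apply]
      by_cases hab : a = b
      · subst hab
        simp [hN, hD, Matrix.diagonal_apply_eq]
        ring
      · simp [hN, hab, hD, Matrix.diagonal_apply_ne _ hab]
    rw [← hmap, Matrix.charpoly_map, Polynomial.coeff_map]
    simp
end

section
/- Let M be an n×n real matrix with diagonal entries m₁₁, …, mₙₙ, let D be the diagonal matrix with the same diagonal entries as M, and for a real number t let M_t = M + (t − 1)·D. For each i ≤ n, viewing the coefficient of x^i in the characteristic polynomial of M_t as a polynomial P_i in t, the coefficient of t^{n−i} in P_i equals the (n−i)-th elementary symmetric polynomial evaluated at the negated diagonal entries (−m₁₁, …, −mₙₙ). -/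
open Matrix Polynomial

private noncomputable def Nmat (n : ℕ) (M : Matrix (Fin n) (Fin n) ℝ) :
    Matrix (Fin n) (Fin n) (Polynomial ℝ) :=
  Matrix.of fun j k => if j = k then (X : Polynomial ℝ) * C (M j j) else C (M j k)

private lemma key (n : ℕ) (M : Matrix (Fin n) (Fin n) ℝ) (σ : Equiv.Perm (Fin n)) (i : ℕ)
    (hi : i ≤ n) :
    (((∏ j, charmatrix (Nmat n M) (σ j) j).coeff i).coeff (n - i)) =
      if σ = 1 then (-1 : ℝ) ^ (n - i) *
        ∑ s ∈ Finset.univ.powersetCard (n - i), ∏ j ∈ s, M j j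
      else 0 := by
  classical
  set F : Finset (Fin n) := Finset.univ.filter (fun j => σ j = j) with hF
  set c : ℕ := F.card with hc
  -- split the product
  have hsplit : (∏ j, charmatrix (Nmat n M) (σ j) j) =
      (∏ j ∈ F, (X - C (X * C (M j j)))) *
      C (C (∏ j ∈ Finset.univ.filter (fun j => ¬ σ j = j), (-(M (σ j) j)))) := by
    rw [← Finset.prod_filter_mul_prod_filter_not Finset.univ (fun j => σ j = j)]
    congr 1
    · refine Finset.prod_congr rfl fun j hj => ?_
      have hfix : σ j = j := (Finset.mem_filter.mp hj).2
      rw [hfix, charmatrix_apply_eq]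
      congr 1
      simp [Nmat]
    · rw [map_prod, map_prod]
      refine Finset.prod_congr rfl fun j hj => ?_
      have hne : σ j ≠ j := (Finset.mem_filter.mp hj).2
      rw [charmatrix_apply_ne _ _ _ hne]
      have : Nmat n M (σ j) j = C (M (σ j) j) := by simp [Nmat, hne]
      rw [this, map_neg, map_neg]
  rw [hsplit, Polynomial.coeff_mul_C, Polynomial.coeff_mul_C]
  set p : (Polynomial ℝ)[X] := ∏ j ∈ F, (X - C ((X : Polynomial ℝ) * C (M j j))) with hp
  by_cases hic : i ≤ c
  · -- use Vieta
    have hcoeff : p.coeff i = (-1) ^ (c - i) *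
        ∑ s ∈ F.powersetCard (c - i), ∏ j ∈ s, ((X : Polynomial ℝ) * C (M j j)) := by
      rw [hp, Finset.prod_eq_multiset_prod]
      have : F.val.map (fun j => X - C ((X : Polynomial ℝ) * C (M j j))) =
          (F.val.map (fun j => (X : Polynomial ℝ) * C (M j j))).map (fun a => X - C a) := by
        rw [Multiset.map_map]; rfl
      rw [this, Multiset.prod_X_sub_C_coeff _ (by simpa using hic)]
      rw [Multiset.card_map, Finset.esymm_map_val]
      rfl
    rw [hcoeff]
    have hneg : ((-1 : (Polynomial ℝ)) ^ (c - i) *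
        ∑ s ∈ F.powersetCard (c - i), ∏ j ∈ s, ((X : Polynomial ℝ) * C (M j j))).coeff (n - i) =
        (-1 : ℝ) ^ (c - i) *
        ∑ s ∈ F.powersetCard (c - i),
          ((∏ j ∈ s, ((X : Polynomial ℝ) * C (M j j))).coeff (n - i)) := by
      have : ((-1 : (Polynomial ℝ)) ^ (c - i)) = C ((-1 : ℝ) ^ (c - i)) := by
        simp
      rw [this, Polynomial.coeff_C_mul, finset_sum_coeff]
    rw [hneg]
    have hterm : ∀ s ∈ F.powersetCard (c - i),
        (∏ j ∈ s, ((X : Polynomial ℝ) * C (M j j))).coeff (n - i) =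
        if n - i = c - i then ∏ j ∈ s, M j j else 0 := by
      intro s hs
      have hcard : s.card = c - i := (Finset.mem_powersetCard.mp hs).2
      have : (∏ j ∈ s, ((X : Polynomial ℝ) * C (M j j))) =
          C (∏ j ∈ s, M j j) * X ^ (c - i) := by
        rw [Finset.prod_mul_distrib, Finset.prod_const, hcard, map_prod]
        ring
      rw [this, Polynomial.coeff_C_mul_X_pow]
    by_cases hσ : σ = 1
    · have hFuniv : F = Finset.univ := by
        rw [hF, hσ]; simp
      have hcn : c = n := by rw [hc, hFuniv, Finset.card_univ, Fintype.card_fin]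
      rw [if_pos hσ]
      have hr : (∏ j ∈ Finset.univ.filter (fun j => ¬ σ j = j), (-(M (σ j) j))) = 1 := by
        rw [hσ]; simp
      rw [hr, mul_one]
      rw [Finset.sum_congr rfl hterm, hFuniv, hcn]
      simp
    · rw [if_neg hσ]
      have hclt : c < n := by
        rcases not_forall.mp (fun h => hσ (Equiv.ext h)) with ⟨j, hj⟩
        have : F ⊂ Finset.univ := by
          refine Finset.ssubset_univ_iff.mpr fun h => hj ?_
          have hm : j ∈ F := h ▸ Finset.mem_univ j
          exact (Finset.mem_filter.mp hm).2
        calc c = F.card := rfl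
          _ < Finset.univ.card := Finset.card_lt_card this
          _ = n := by simp
      have hne : ¬ (n - i = c - i) := by omega
      rw [Finset.sum_congr rfl hterm]
      simp [hne]
  · -- degree too small
    push_neg at hic
    have hdeg : p.natDegree < i := by
      have : p.natDegree ≤ ∑ j ∈ F, 1 := by
        refine le_trans (Polynomial.natDegree_prod_le _ _) ?_
        exact Finset.sum_le_sum fun j _ => Polynomial.natDegree_X_sub_C_le _
      simp only [Finset.sum_const, smul_eq_mul, mul_one] at this
      omega
    rw [Polynomial.coeff_eq_zero_of_natDegree_lt hdeg, Polynomial.coeff_zero, zero_mul]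
    have hσ : σ ≠ 1 := by
      intro h
      apply absurd hic
      push_neg
      have : F = Finset.univ := by rw [hF, h]; simp
      calc i ≤ n := hi
        _ = c := by rw [hc, this]; simp
    rw [if_neg hσ]

theorem stmt_1 (n : ℕ) (M : Matrix (Fin n) (Fin n) ℝ)
    (D : Matrix (Fin n) (Fin n) ℝ) (hD : D = Matrix.diagonal (fun i => M i i)) :
    ∀ i ≤ n, ∀ P : Polynomial ℝ,
      (∀ t : ℝ, P.eval t = (M + (t - 1) • D).charpoly.coeff i) →
      P.coeff (n - i) =
        ∑ s ∈ Finset.univ.powersetCard (n - i), ∏ j ∈ s, (-(M j j)) := by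
  intro i hi P hP
  have hPQ : P = ((Nmat n M).charpoly).coeff i := by
    apply Polynomial.funext
    intro t
    rw [hP t]
    have hmap : ((Nmat n M).map (evalRingHom t)) = M + (t - 1) • D := by
      ext j k
      by_cases h : j = k
      · subst h; simp [Nmat, hD, Matrix.diagonal]; ring
      · simp [Nmat, hD, Matrix.diagonal_apply_ne' _ (fun hh => h hh.symm), h]
    rw [← hmap, Matrix.charpoly_map, Polynomial.coeff_map]
    rfl
  rw [hPQ, Matrix.charpoly, Matrix.det_apply]
  simp only [finset_sum_coeff, Polynomial.coeff_smul]
  rw [Finset.sum_eq_single_of_mem (1 : Equiv.Perm (Fin n)) (Finset.mem_univ _)]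
  · have := key n M 1 i hi
    rw [if_pos rfl] at this
    rw [Equiv.Perm.sign_one, one_smul, this]
    rw [Finset.mul_sum]
    refine Finset.sum_congr rfl fun s hs => ?_
    have hcard : s.card = n - i := (Finset.mem_powersetCard.mp hs).2
    calc (-1 : ℝ) ^ (n - i) * ∏ j ∈ s, M j j
        = ∏ j ∈ s, (-1 * M j j) := by
          rw [Finset.prod_mul_distrib, Finset.prod_const, hcard]
      _ = ∏ j ∈ s, (-(M j j)) := by simp
  · intro σ _ hσ
    have := key n M σ i hi
    rw [if_neg hσ] at this
    rw [this, smul_zero]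
end

section
/- Let M be an n×n real matrix (n ≥ 1) all of whose diagonal entries are strictly negative, let D be the diagonal matrix with the same diagonal entries as M, and for a real number t let M_t = M + (t − 1)·D. Then there exists a real number σ₀ such that for every real σ ≥ σ₀, every complex root of the characteristic polynomial of M_σ (i.e., every complex eigenvalue of M_σ) has strictly negative real part. -/
open Matrix Polynomial

theorem stmt_4 (n : ℕ) (hn : 1 ≤ n) (M : Matrix (Fin n) (Fin n) ℝ)
    (hdiag : ∀ i, M i i < 0)
    (D : Matrix (Fin n) (Fin n) ℝ) (hD : D = Matrix.diagonal (fun i => M i i)) :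
    ∃ σ₀ : ℝ, ∀ σ : ℝ, σ₀ ≤ σ →
      ∀ z : ℂ, ((M + (σ - 1) • D).charpoly.map (algebraMap ℝ ℂ)).IsRoot z →
        z.re < 0 := by
  have hne : Nonempty (Fin n) := Fin.pos_iff_nonempty.mp hn
  have hne' : (Finset.univ : Finset (Fin n)).Nonempty := Finset.univ_nonempty
  set c : ℝ := Finset.univ.inf' hne' (fun k => -M k k) with hc
  set R : ℝ := Finset.univ.sup' hne' (fun k => ∑ j ∈ Finset.univ.erase k, |M k j|) with hR
  have hcpos : 0 < c := by
    rw [hc, Finset.lt_inf'_iff]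
    intro k _
    linarith [hdiag k]
  have hR0 : 0 ≤ R := by
    obtain ⟨k⟩ := hne
    refine le_trans ?_ (Finset.le_sup' _ (Finset.mem_univ k))
    positivity
  refine ⟨(R + 1) / c, fun σ hσ z hz => ?_⟩
  set A : Matrix (Fin n) (Fin n) ℂ := (M + (σ - 1) • D).map (algebraMap ℝ ℂ) with hA
  have hσpos : 0 < σ := lt_of_lt_of_le (by positivity) hσ
  -- z is an eigenvalue of A
  have hdet : (Matrix.diagonal (fun _ : Fin n => z) - A).det = 0 := by
    have h1 : A.charpoly.eval z = 0 := by
      rw [hA, Matrix.charpoly_map]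
      exact hz
    have h2 : (Matrix.charmatrix A).map (Polynomial.evalRingHom z) =
        Matrix.diagonal (fun _ : Fin n => z) - A := by
      ext i j
      by_cases h : i = j
      · subst h; simp [Matrix.charmatrix_apply_eq]
      · simp [Matrix.charmatrix_apply_ne _ _ _ h, Matrix.diagonal_apply_ne _ h]
    calc (Matrix.diagonal (fun _ : Fin n => z) - A).det
        = ((Matrix.charmatrix A).map (Polynomial.evalRingHom z)).det := by rw [h2]
      _ = (Polynomial.evalRingHom z) (Matrix.charmatrix A).det := by
          rw [RingHom.map_det (Polynomial.evalRingHom z) (Matrix.charmatrix A),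
            RingHom.mapMatrix_apply]
      _ = A.charpoly.eval z := by rw [coe_evalRingHom]; rfl
      _ = 0 := h1
  have hspec : z ∈ spectrum ℂ A := by
    rw [spectrum.mem_iff]
    intro hu
    rw [Matrix.isUnit_iff_isUnit_det] at hu
    have : (algebraMap ℂ (Matrix (Fin n) (Fin n) ℂ)) z - A
        = Matrix.diagonal (fun _ : Fin n => z) - A := by
      rw [Matrix.algebraMap_eq_diagonal]; rfl
    rw [this, hdet] at hu
    exact hu.ne_zero rfl
  have heig : Module.End.HasEigenvalue (Matrix.toLin' A) z := by
    rw [Module.End.hasEigenvalue_iff_mem_spectrum]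
    have := AlgEquiv.spectrum_eq (Matrix.toLinAlgEquiv' (R := ℂ) (n := Fin n)) A
    have he : Matrix.toLinAlgEquiv' A = Matrix.toLin' A := rfl
    rw [← he]
    rw [this]
    exact hspec
  obtain ⟨k, hk⟩ := eigenvalue_mem_ball heig
  rw [Metric.mem_closedBall] at hk
  -- diagonal entry
  have hAkk : A k k = ((σ * M k k : ℝ) : ℂ) := by
    simp [hA, hD, Matrix.diagonal_apply_eq]
    ring
  have hAkj : ∀ j, j ≠ k → ‖A k j‖ = |M k j| := by
    intro j hj
    simp [hA, hD, Matrix.diagonal_apply_ne _ (Ne.symm hj), Complex.norm_real, Real.norm_eq_abs]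
  have hsum : ∑ j ∈ Finset.univ.erase k, ‖A k j‖ ≤ R := by
    refine le_trans (le_of_eq ?_) (Finset.le_sup' _ (Finset.mem_univ k))
    exact Finset.sum_congr rfl fun j hj => hAkj j (Finset.ne_of_mem_erase hj)
  have hre : z.re - σ * M k k ≤ dist z (A k k) := by
    have : dist z (A k k) = ‖z - A k k‖ := by
      rw [Complex.dist_eq]
    rw [this]
    calc z.re - σ * M k k = (z - A k k).re := by rw [hAkk]; simp
      _ ≤ |(z - A k k).re| := le_abs_self _
      _ ≤ ‖z - A k k‖ := Complex.abs_re_le_norm _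
  have hMk : M k k ≤ -c := by
    have := Finset.inf'_le (fun k => -M k k) (Finset.mem_univ k)
    linarith [this]
  have h1 : σ * M k k ≤ -(R + 1) := by
    have h2 : σ * M k k ≤ σ * (-c) :=
      mul_le_mul_of_nonneg_left hMk (le_of_lt hσpos)
    have h3 : (R + 1) / c * c ≤ σ * c :=
      mul_le_mul_of_nonneg_right hσ (le_of_lt hcpos)
    rw [div_mul_cancel₀ _ (ne_of_gt hcpos)] at h3
    nlinarith
  have := hk.trans hsum
  linarith
end

section
/- Let p be a monic polynomial with real coefficients such that every complex root of p (viewed as a polynomial over ℂ) has real part at most 0. Then every coefficient of p is nonnegative. -/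
open Polynomial

private lemma mul_coeff_nonneg' {p q : Polynomial ℝ} (hp : ∀ i, 0 ≤ p.coeff i)
    (hq : ∀ i, 0 ≤ q.coeff i) : ∀ n, 0 ≤ (p * q).coeff n := fun n => by
  rw [Polynomial.coeff_mul]
  exact Finset.sum_nonneg fun x _ => mul_nonneg (hp _) (hq _)

private lemma stmt_6_aux (n : ℕ) : ∀ p : Polynomial ℝ, p.natDegree ≤ n → p.Monic →
    (∀ z : ℂ, (p.map (algebraMap ℝ ℂ)).IsRoot z → z.re ≤ 0) → ∀ i, 0 ≤ p.coeff i := by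
  induction n with
  | zero =>
    intro p hdeg hmonic _ i
    have : p = 1 := hmonic.natDegree_eq_zero.mp (Nat.le_zero.mp hdeg)
    subst this
    simp [Polynomial.coeff_one]
    positivity
  | succ n ih =>
    intro p hdeg hmonic hroots i
    rcases Nat.eq_zero_or_pos p.natDegree with h0 | hpos
    · have : p = 1 := hmonic.natDegree_eq_zero.mp h0
      subst this
      simp [Polynomial.coeff_one]
      positivity
    · -- p has a complex root
      obtain ⟨z, hz⟩ := Complex.exists_root (f := p.map (algebraMap ℝ ℂ)) (by
        rw [Polynomial.degree_map_eq_of_injective (algebraMap ℝ ℂ).injective,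
          Polynomial.degree_eq_natDegree hmonic.ne_zero]
        exact_mod_cast hpos)
      have hzre : z.re ≤ 0 := hroots z hz
      have haez : Polynomial.aeval z p = 0 := by
        rwa [Polynomial.aeval_def, ← Polynomial.eval_map]
      rcases eq_or_ne z.im 0 with him | him
      · -- real root
        have hr : p.IsRoot z.re := by
          have h1 : (algebraMap ℝ ℂ) (p.eval z.re) = 0 := by
            rw [← Polynomial.eval₂_hom, ← Polynomial.eval_map,
              show (algebraMap ℝ ℂ) z.re = z from Complex.ext rfl him.symm]
            exact hz
          exact (algebraMap ℝ ℂ).injective (by simpa using h1)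
        obtain ⟨q, hq⟩ := Polynomial.dvd_iff_isRoot.mpr hr
        have hqmonic : q.Monic := (Polynomial.monic_X_sub_C z.re).of_mul_monic_left (hq ▸ hmonic)
        have hqdeg : q.natDegree ≤ n := by
          have := hq ▸ hmonic.natDegree_mul (Polynomial.monic_X_sub_C z.re) |>.symm
          have hpd : p.natDegree = 1 + q.natDegree := by
            rw [hq, Polynomial.natDegree_mul (Polynomial.X_sub_C_ne_zero z.re) hqmonic.ne_zero,
              Polynomial.natDegree_X_sub_C]
          omega
        have hqroots : ∀ w : ℂ, (q.map (algebraMap ℝ ℂ)).IsRoot w → w.re ≤ 0 := by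
          intro w hw
          apply hroots
          rw [hq, Polynomial.map_mul]
          exact Polynomial.IsRoot.dvd hw ⟨_, (mul_comm _ _)⟩
        have hqnn := ih q hqdeg hqmonic hqroots
        rw [hq]
        refine mul_coeff_nonneg' (fun j => ?_) hqnn i
        have hco : (Polynomial.X - Polynomial.C z.re).coeff j
            = (if 1 = j then 1 else 0) - (if j = 0 then z.re else 0) := by
          rw [Polynomial.coeff_sub, Polynomial.coeff_X, Polynomial.coeff_C]
        rw [hco]
        split_ifs <;> norm_num <;> linarith
      · -- complex root, quadratic factor
        obtain ⟨q, hq⟩ := p.quadratic_dvd_of_aeval_eq_zero_im_ne_zero haez him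
        set Q : Polynomial ℝ := Polynomial.X ^ 2 - Polynomial.C (2 * z.re) * Polynomial.X
          + Polynomial.C (‖z‖ ^ 2) with hQdef
        have hQmonic : Q.Monic := by
          unfold Q
          monicity!
        have hqmonic : q.Monic := hQmonic.of_mul_monic_left (hq ▸ hmonic)
        have hQdeg : Q.natDegree = 2 := by
          unfold Q
          compute_degree!
        have hqdeg : q.natDegree ≤ n := by
          have hpd : p.natDegree = 2 + q.natDegree := by
            rw [hq, Polynomial.natDegree_mul hQmonic.ne_zero hqmonic.ne_zero, hQdeg]
          omega
        have hqroots : ∀ w : ℂ, (q.map (algebraMap ℝ ℂ)).IsRoot w → w.re ≤ 0 := by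
          intro w hw
          apply hroots
          rw [hq, Polynomial.map_mul]
          exact Polynomial.IsRoot.dvd hw ⟨_, (mul_comm _ _)⟩
        have hqnn := ih q hqdeg hqmonic hqroots
        rw [hq]
        refine mul_coeff_nonneg' (fun j => ?_) hqnn i
        have hco : Q.coeff j = (if j = 2 then 1 else 0)
            - 2 * z.re * (if 1 = j then 1 else 0) + (if j = 0 then ‖z‖ ^ 2 else 0) := by
          rw [hQdef, Polynomial.coeff_add, Polynomial.coeff_sub, Polynomial.coeff_X_pow,
            Polynomial.coeff_C_mul, Polynomial.coeff_X, Polynomial.coeff_C]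
        rw [hco]
        have hn : (0:ℝ) ≤ ‖z‖ ^ 2 := by positivity
        split_ifs <;> norm_num <;> linarith

theorem stmt_6 (p : Polynomial ℝ) (hmonic : p.Monic)
    (hroots : ∀ z : ℂ, (p.map (algebraMap ℝ ℂ)).IsRoot z → z.re ≤ 0) :
    ∀ i, 0 ≤ p.coeff i :=
  stmt_6_aux p.natDegree p le_rfl hmonic hroots
end

section
/- Let A be an n×n real matrix (n ≥ 1) such that every complex root of its characteristic polynomial has strictly negative real part. Then every coefficient of the characteristic polynomial of A (the coefficients of x^0 through x^n) is strictly positive. -/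
open Matrix Polynomial

/-- All coefficients up to the degree are positive. -/
def PosCoeffs (p : Polynomial ℝ) : Prop := ∀ i ≤ p.natDegree, 0 < p.coeff i

lemma posCoeffs_nonneg {p : Polynomial ℝ} (hp : PosCoeffs p) (i : ℕ) : 0 ≤ p.coeff i := by
  by_cases h : i ≤ p.natDegree
  · exact (hp i h).le
  · simp [Polynomial.coeff_eq_zero_of_natDegree_lt (lt_of_not_ge h)]

lemma posCoeffs_mul {p q : Polynomial ℝ} (hp : PosCoeffs p) (hq : PosCoeffs q) :
    PosCoeffs (p * q) := by
  have hp0 : p ≠ 0 := fun h => by simpa [h] using hp 0 (by simp [h])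
  have hq0 : q ≠ 0 := fun h => by simpa [h] using hq 0 (by simp [h])
  intro k hk
  rw [Polynomial.natDegree_mul hp0 hq0] at hk
  rw [Polynomial.coeff_mul]
  apply Finset.sum_pos'
  · intro x _
    exact mul_nonneg (posCoeffs_nonneg hp _) (posCoeffs_nonneg hq _)
  · refine ⟨(min k p.natDegree, k - min k p.natDegree), ?_, ?_⟩
    · simp only [Finset.HasAntidiagonal.mem_antidiagonal]; omega
    · exact mul_pos (hp _ (min_le_right _ _)) (hq _ (by omega))

lemma posCoeffs_of_monic_of_roots :
    ∀ (N : ℕ) (p : Polynomial ℝ), p.natDegree ≤ N → p.Monic →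
    (∀ z : ℂ, (p.map (algebraMap ℝ ℂ)).IsRoot z → z.re < 0) → PosCoeffs p := by
  intro N
  induction N with
  | zero =>
    intro p hdeg hmon _
    intro i hi
    have h0 : p.natDegree = 0 := le_antisymm hdeg (Nat.zero_le _)
    have : i = 0 := by omega
    subst this
    have := hmon.leadingCoeff
    rw [Polynomial.leadingCoeff, h0] at this
    rw [this]; exact one_pos
  | succ N ih =>
    intro p hdeg hmon hroots
    by_cases h0 : p.natDegree = 0
    · intro i hi
      rw [h0] at hi
      have : i = 0 := by omega
      subst this
      have := hmon.leadingCoeff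
      rw [Polynomial.leadingCoeff, h0] at this
      rw [this]; exact one_pos
    · -- p has positive degree; find a complex root
      have hmapne : p.map (algebraMap ℝ ℂ) ≠ 0 := by
        simpa [Polynomial.map_eq_zero_iff (algebraMap ℝ ℂ).injective] using hmon.ne_zero
      have hdegmap : (p.map (algebraMap ℝ ℂ)).natDegree = p.natDegree :=
        Polynomial.natDegree_map_eq_of_injective (algebraMap ℝ ℂ).injective p
      have hdpos : 0 < (p.map (algebraMap ℝ ℂ)).degree := by
        rw [Polynomial.natDegree_pos_iff_degree_pos.symm, hdegmap]
        omega
      obtain ⟨z, hz⟩ := Complex.exists_root hdpos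
      have hzre : z.re < 0 := hroots z hz
      by_cases him : z.im = 0
      · -- real root
        have hzeq : (algebraMap ℝ ℂ) z.re = z := by
          apply Complex.ext <;> simp [him]
        have hroot : p.IsRoot z.re := by
          have : (algebraMap ℝ ℂ) (p.eval z.re) = 0 := by
            rw [← Polynomial.eval₂_at_apply, ← Polynomial.eval_map, hzeq]
            exact hz
          exact Polynomial.IsRoot.def.mpr
            ((map_eq_zero_iff _ (algebraMap ℝ ℂ).injective).mp this)
        obtain ⟨q, hpq⟩ := Polynomial.dvd_iff_isRoot.mpr hroot
        have hdmon : (Polynomial.X - Polynomial.C z.re).Monic := Polynomial.monic_X_sub_C _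
        have hqmon : q.Monic := hdmon.of_mul_monic_left (hpq ▸ hmon)
        have hq0 : q ≠ 0 := hqmon.ne_zero
        have hdegq : q.natDegree ≤ N := by
          have := Polynomial.natDegree_mul (Polynomial.X_sub_C_ne_zero z.re) hq0
          rw [← hpq, Polynomial.natDegree_X_sub_C] at this
          omega
        have hqroots : ∀ w : ℂ, (q.map (algebraMap ℝ ℂ)).IsRoot w → w.re < 0 := by
          intro w hw
          apply hroots
          rw [hpq, Polynomial.map_mul]
          exact Polynomial.IsRoot.def.mpr (by
            rw [Polynomial.eval_mul, Polynomial.IsRoot.def.mp hw, mul_zero])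
        have hqpos := ih q hdegq hqmon hqroots
        have hdpos' : PosCoeffs (Polynomial.X - Polynomial.C z.re) := by
          intro i hi
          rw [Polynomial.natDegree_X_sub_C] at hi
          interval_cases i <;>
            simp [Polynomial.coeff_sub, Polynomial.coeff_X, Polynomial.coeff_C] <;> linarith
        rw [hpq]
        exact posCoeffs_mul hdpos' hqpos
      · -- nonreal root: conjugate is also a root, quadratic factor
        set w := (starRingEnd ℂ) z with hw
        have hzw : z ≠ w := by
          intro h
          rw [hw] at h
          have := Complex.conj_eq_iff_im.mp h.symm
          exact him this
        -- w is also a root of p.map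
        have hwroot : (p.map (algebraMap ℝ ℂ)).IsRoot w := by
          have : (p.map (algebraMap ℝ ℂ)).eval w =
              (starRingEnd ℂ) ((p.map (algebraMap ℝ ℂ)).eval z) := by
            rw [hw]
            conv_lhs => rw [Polynomial.eval_map, Polynomial.eval₂_eq_sum]
            rw [Polynomial.eval_map, Polynomial.eval₂_eq_sum, Polynomial.sum, Polynomial.sum,
              map_sum]
            apply Finset.sum_congr rfl
            intro i _
            simp [_root_.map_mul, map_pow]
          rw [Polynomial.IsRoot.def, this, Polynomial.IsRoot.def.mp hz, map_zero]
        -- quadratic real factor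
        set d : Polynomial ℝ := Polynomial.X ^ 2 + Polynomial.C (-(2 * z.re)) * Polynomial.X +
          Polynomial.C (Complex.normSq z) with hd
        have hdmon : d.Monic := by
          rw [hd, add_assoc]
          apply Polynomial.monic_X_pow_add
          apply lt_of_le_of_lt (Polynomial.degree_add_le _ _)
          apply max_lt
          · exact lt_of_le_of_lt (Polynomial.degree_C_mul_X_le _) (by norm_num)
          · exact lt_of_le_of_lt Polynomial.degree_C_le (by norm_num)
        have hdmap : d.map (algebraMap ℝ ℂ) =
            (Polynomial.X - Polynomial.C z) * (Polynomial.X - Polynomial.C w) := by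
          rw [hd]
          have h1 : z + w = ((2 * z.re : ℝ) : ℂ) := by
            rw [hw]; exact_mod_cast Complex.add_conj z
          have h2 : z * w = ((Complex.normSq z : ℝ) : ℂ) := by
            rw [hw]; exact_mod_cast Complex.mul_conj z
          simp only [Polynomial.map_add, Polynomial.map_mul, Polynomial.map_pow,
            Polynomial.map_X, Polynomial.map_C]
          have : ((algebraMap ℝ ℂ) (-(2 * z.re))) = -(z + w) := by
            rw [h1]; simp
          rw [this]
          have : ((algebraMap ℝ ℂ) (Complex.normSq z)) = z * w := by
            rw [h2]; simp
          rw [this]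
          simp only [Polynomial.C_neg, Polynomial.C_add, Polynomial.C_mul]
          ring
        -- d.map divides p.map
        have hdvdmap : d.map (algebraMap ℝ ℂ) ∣ p.map (algebraMap ℝ ℂ) := by
          rw [hdmap]
          obtain ⟨q1, hq1⟩ := Polynomial.dvd_iff_isRoot.mpr hz
          have hq1w : q1.IsRoot w := by
            have := Polynomial.IsRoot.def.mp hwroot
            rw [hq1, Polynomial.eval_mul] at this
            have hne : (Polynomial.X - Polynomial.C z).eval w ≠ 0 := by
              simp [sub_eq_zero]
              exact fun h => hzw h.symm
            rcases mul_eq_zero.mp this with h | h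
            · exact absurd h hne
            · exact h
          obtain ⟨q2, hq2⟩ := Polynomial.dvd_iff_isRoot.mpr hq1w
          exact ⟨q2, by rw [hq1, hq2, mul_assoc]⟩
        have hdvd : d ∣ p := by
          have hmod : (p %ₘ d).map (algebraMap ℝ ℂ) = 0 := by
            rw [Polynomial.map_modByMonic _ hdmon]
            exact (Polynomial.modByMonic_eq_zero_iff_dvd (hdmon.map _)).mpr hdvdmap
          rw [Polynomial.map_eq_zero_iff (algebraMap ℝ ℂ).injective] at hmod
          exact (Polynomial.modByMonic_eq_zero_iff_dvd hdmon).mp hmod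
        obtain ⟨q, hpq⟩ := hdvd
        have hqmon : q.Monic := hdmon.of_mul_monic_left (hpq ▸ hmon)
        have hq0 : q ≠ 0 := hqmon.ne_zero
        have hdegd : d.natDegree = 2 := by
          have := hdmon.ne_zero
          rw [hd]
          compute_degree!
        have hdegq : q.natDegree ≤ N := by
          have := Polynomial.natDegree_mul hdmon.ne_zero hq0
          rw [← hpq, hdegd] at this
          omega
        have hqroots : ∀ v : ℂ, (q.map (algebraMap ℝ ℂ)).IsRoot v → v.re < 0 := by
          intro v hv
          apply hroots
          rw [hpq, Polynomial.map_mul]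
          exact Polynomial.IsRoot.def.mpr (by
            rw [Polynomial.eval_mul, Polynomial.IsRoot.def.mp hv, mul_zero])
        have hqpos := ih q hdegq hqmon hqroots
        have hz0 : z ≠ 0 := fun h => him (by rw [h]; simp)
        have hnsq : 0 < Complex.normSq z := Complex.normSq_pos.mpr hz0
        have c0 : d.coeff 0 = Complex.normSq z := by
          simp [hd, Polynomial.coeff_X_pow]
        have c1 : d.coeff 1 = -(2 * z.re) := by
          simp [hd, Polynomial.coeff_X_pow]
        have c2 : d.coeff 2 = 1 := by
          simp [hd, Polynomial.coeff_X_pow]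
        have hdposc : PosCoeffs d := by
          intro i hi
          rw [hdegd] at hi
          interval_cases i
          · rw [c0]; exact hnsq
          · rw [c1]; linarith
          · rw [c2]; exact one_pos
        rw [hpq]
        exact posCoeffs_mul hdposc hqpos

theorem stmt_8 (n : ℕ) (hn : 1 ≤ n) (A : Matrix (Fin n) (Fin n) ℝ)
    (hroots : ∀ z : ℂ, (A.charpoly.map (algebraMap ℝ ℂ)).IsRoot z → z.re < 0) :
    ∀ i ≤ n, 0 < A.charpoly.coeff i := by
  have hdeg : A.charpoly.natDegree = n := by
    rw [Matrix.charpoly_natDegree_eq_dim, Fintype.card_fin]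
  intro i hi
  exact posCoeffs_of_monic_of_roots A.charpoly.natDegree A.charpoly le_rfl
    (Matrix.charpoly_monic A) hroots i (by omega)
end

section
/- Let M be an n×n real matrix (n ≥ 1), let D be the diagonal matrix with the same diagonal entries as M, and for a real number t let M_t = M + (t − 1)·D. Let Ω = { t ∈ ℝ : there exists i < n such that the coefficient of x^i in the characteristic polynomial of M_t equals 0 } (the set of real roots of the coefficient polynomials p_i). Suppose σ ∈ ℝ satisfies: (i) 0 is a root of the characteristic polynomial of M_σ (i.e., det(M_σ) = 0); (ii) every complex root of the characteristic polynomial of M_σ has real part at most 0; and (iii) for every real σ' > σ, every complex root of the characteristic polynomial of M_{σ'} has strictly negative real part. Then σ is the greatest element of Ω, i.e., σ ∈ Ω and t ≤ σ for all t ∈ Ω. -/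
open Matrix Polynomial

private lemma posCoeff_mul {p q : Polynomial ℝ}
    (hp : ∀ i ≤ p.natDegree, 0 < p.coeff i)
    (hq : ∀ i ≤ q.natDegree, 0 < q.coeff i) :
    ∀ i ≤ (p * q).natDegree, 0 < (p * q).coeff i := by
  have hp0 : p ≠ 0 := by
    intro h
    simpa [h] using hp 0 (by simp [h])
  have hq0 : q ≠ 0 := by
    intro h
    simpa [h] using hq 0 (by simp [h])
  have hpn : ∀ i, 0 ≤ p.coeff i := by
    intro i
    rcases le_or_gt i p.natDegree with h | h
    · exact (hp i h).le
    · simp [coeff_eq_zero_of_natDegree_lt h]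
  have hqn : ∀ i, 0 ≤ q.coeff i := by
    intro i
    rcases le_or_gt i q.natDegree with h | h
    · exact (hq i h).le
    · simp [coeff_eq_zero_of_natDegree_lt h]
  intro i hi
  rw [natDegree_mul hp0 hq0] at hi
  rw [coeff_mul]
  apply Finset.sum_pos'
  · intro x _
    exact mul_nonneg (hpn _) (hqn _)
  · refine ⟨(min i p.natDegree, i - min i p.natDegree), ?_, ?_⟩
    · rw [Finset.HasAntidiagonal.mem_antidiagonal]
      omega
    · exact mul_pos (hp _ (min_le_right _ _)) (hq _ (by omega))

private lemma hurwitz_aux : ∀ (N : ℕ) (p : Polynomial ℝ), p.natDegree ≤ N → p.Monic →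
    (∀ z : ℂ, (p.map (algebraMap ℝ ℂ)).IsRoot z → z.re < 0) →
    ∀ i ≤ p.natDegree, 0 < p.coeff i := by
  intro N
  induction N with
  | zero =>
    intro p hdeg hm _ i hi
    have : i = p.natDegree := by omega
    rw [this, hm.coeff_natDegree]
    norm_num
  | succ N ih =>
    intro p hdeg hm hroots i hi
    rcases Nat.eq_zero_or_pos p.natDegree with h0 | hpos
    · have : i = p.natDegree := by omega
      rw [this, hm.coeff_natDegree]
      norm_num
    · -- p has a complex root
      have hmapdeg : (p.map (algebraMap ℝ ℂ)).natDegree = p.natDegree :=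
        natDegree_map_eq_of_injective (algebraMap ℝ ℂ).injective p
      have hdegpos : 0 < (p.map (algebraMap ℝ ℂ)).degree := by
        rw [← natDegree_pos_iff_degree_pos, hmapdeg]
        exact hpos
      obtain ⟨z, hz⟩ := Complex.exists_root hdegpos
      have hzre : z.re < 0 := hroots z hz
      have haev : aeval z p = 0 := by
        rwa [IsRoot, eval_map, ← aeval_def] at hz
      by_cases him : z.im = 0
      · -- real root
        have hz' : ((z.re : ℝ) : ℂ) = z := by
          apply Complex.ext <;> simp [him]
        have hr : p.IsRoot z.re := by
          have h1 : aeval ((z.re : ℝ) : ℂ) p = 0 := by rw [hz']; exact haev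
          rw [aeval_def, ← Complex.coe_algebraMap, eval₂_at_apply] at h1
          have : ((eval z.re p : ℝ) : ℂ) = 0 := h1
          exact_mod_cast this
        obtain ⟨q, hq⟩ := dvd_iff_isRoot.mpr hr
        have hqm : q.Monic := (monic_X_sub_C z.re).of_mul_monic_left (hq ▸ hm)
        have hf : ∀ j ≤ (X - C z.re : ℝ[X]).natDegree, 0 < (X - C z.re : ℝ[X]).coeff j := by
          intro j hj
          rw [natDegree_X_sub_C] at hj
          interval_cases j <;> simp <;> linarith
        have hdq : q.natDegree ≤ N := by
          have := hq ▸ hdeg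
          rw [natDegree_mul (X_sub_C_ne_zero z.re) hqm.ne_zero, natDegree_X_sub_C] at this
          omega
        have hqroots : ∀ w : ℂ, (q.map (algebraMap ℝ ℂ)).IsRoot w → w.re < 0 := by
          intro w hw
          apply hroots
          exact hw.dvd (Polynomial.map_dvd _ (Dvd.intro_left _ hq.symm))
        have := posCoeff_mul hf (ih q hdq hqm hqroots)
        rw [← hq] at this
        exact this i hi
      · -- nonreal root; factor out real quadratic
        have hconj : aeval ((starRingEnd ℂ) z) p = 0 := by
          rw [aeval_conj, haev, map_zero]
        set f : ℝ[X] := X ^ 2 + C (-(2 * z.re)) * X + C (Complex.normSq z) with hfdef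
        have hcoeff2 : f.coeff 2 = 1 := by
          simp [hfdef, coeff_X_pow]
        have hfdegle : f.natDegree ≤ 2 := by
          rw [hfdef]
          compute_degree
        have hfm : f.Monic := monic_of_natDegree_le_of_coeff_eq_one 2 hfdegle hcoeff2
        have hfdeg : f.natDegree = 2 := by
          refine le_antisymm hfdegle (le_natDegree_of_ne_zero ?_)
          rw [hcoeff2]; norm_num
        have hmapf : f.map (algebraMap ℝ ℂ) = (X - C z) * (X - C ((starRingEnd ℂ) z)) := by
          have expand : (X - C z) * (X - C ((starRingEnd ℂ) z)) =
              X ^ 2 - C (z + (starRingEnd ℂ) z) * X + C (z * (starRingEnd ℂ) z) := by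
            rw [C_add, C_mul]; ring
          rw [expand, Complex.add_conj, Complex.mul_conj]
          simp only [hfdef, Polynomial.map_add, Polynomial.map_mul, Polynomial.map_pow,
            Polynomial.map_X, map_C, Complex.coe_algebraMap, Complex.ofReal_neg]
          rw [map_neg]
          ring
        have hdvdC : f.map (algebraMap ℝ ℂ) ∣ p.map (algebraMap ℝ ℂ) := by
          rw [hmapf]
          have hne : IsUnit (z - (starRingEnd ℂ) z) := by
            apply Ne.isUnit
            rw [sub_ne_zero]
            intro h
            exact him (Complex.conj_eq_iff_im.mp h.symm)
          refine (isCoprime_X_sub_C_of_isUnit_sub hne).mul_dvd ?_ ?_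
          · rw [dvd_iff_isRoot]
            rwa [IsRoot, eval_map, ← aeval_def]
          · rw [dvd_iff_isRoot]
            rwa [IsRoot, eval_map, ← aeval_def]
        have hdvd : f ∣ p :=
          (Polynomial.map_dvd_map (algebraMap ℝ ℂ) (algebraMap ℝ ℂ).injective hfm).mp hdvdC
        obtain ⟨q, hq⟩ := hdvd
        have hqm : q.Monic := hfm.of_mul_monic_left (hq ▸ hm)
        have hf : ∀ j ≤ f.natDegree, 0 < f.coeff j := by
          intro j hj
          rw [hfdeg] at hj
          have hns : 0 < Complex.normSq z := by
            rw [Complex.normSq_pos]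
            intro h
            rw [h] at hzre
            simp at hzre
          interval_cases j
          · simpa [hfdef, coeff_X_pow] using hns
          · simp only [hfdef, coeff_add, coeff_X_pow, coeff_C_mul, coeff_X_one, coeff_C]
            norm_num
            linarith
          · rw [hcoeff2]; norm_num
        have hdq : q.natDegree ≤ N := by
          have := hq ▸ hdeg
          rw [natDegree_mul hfm.ne_zero hqm.ne_zero, hfdeg] at this
          omega
        have hqroots : ∀ w : ℂ, (q.map (algebraMap ℝ ℂ)).IsRoot w → w.re < 0 := by
          intro w hw
          apply hroots
          exact hw.dvd (Polynomial.map_dvd _ (Dvd.intro_left _ hq.symm))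
        have := posCoeff_mul hf (ih q hdq hqm hqroots)
        rw [← hq] at this
        exact this i hi

theorem stmt_9 (n : ℕ) (hn : 1 ≤ n) (M : Matrix (Fin n) (Fin n) ℝ)
    (D : Matrix (Fin n) (Fin n) ℝ) (hD : D = Matrix.diagonal (fun i => M i i))
    (Ω : Set ℝ)
    (hΩ : Ω = {t : ℝ | ∃ i < n, (M + (t - 1) • D).charpoly.coeff i = 0})
    (σ : ℝ)
    (h0 : (M + (σ - 1) • D).det = 0)
    (hle : ∀ z : ℂ, ((M + (σ - 1) • D).charpoly.map (algebraMap ℝ ℂ)).IsRoot z →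
      z.re ≤ 0)
    (hlt : ∀ σ' : ℝ, σ < σ' →
      ∀ z : ℂ, ((M + (σ' - 1) • D).charpoly.map (algebraMap ℝ ℂ)).IsRoot z →
        z.re < 0) :
    σ ∈ Ω ∧ ∀ t ∈ Ω, t ≤ σ := by
  constructor
  · rw [hΩ]
    refine ⟨0, hn, ?_⟩
    have hdet := Matrix.det_eq_sign_charpoly_coeff (M + (σ - 1) • D)
    rw [h0] at hdet
    rcases mul_eq_zero.mp hdet.symm with h | h
    · exfalso
      have : ((-1 : ℝ)) ^ Fintype.card (Fin n) ≠ 0 := by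
        apply pow_ne_zero; norm_num
      exact this h
    · exact h
  · intro t ht
    by_contra hc
    push_neg at hc
    rw [hΩ] at ht
    obtain ⟨i, hi, hzero⟩ := ht
    set p := (M + (t - 1) • D).charpoly with hp
    have hpm : p.Monic := Matrix.charpoly_monic _
    have hpd : p.natDegree = n := by
      rw [hp, Matrix.charpoly_natDegree_eq_dim, Fintype.card_fin]
    have hpos := hurwitz_aux p.natDegree p le_rfl hpm (hlt t hc) i (by omega)
    rw [hzero] at hpos
    exact lt_irrefl 0 hpos
end

section
/- Let M be an n×n real matrix (n ≥ 1), let D be the diagonal matrix with the same diagonal entries as M, and for a real number t let M_t = M + (t − 1)·D. Let Ω = { t ∈ ℝ : there exists i < n such that the coefficient of x^i in the characteristic polynomial of M_t equals 0 }. Suppose σ ∈ ℝ satisfies: for every real σ' > σ, every complex root of the characteristic polynomial of M_{σ'} has strictly negative real part. Then σ is an upper bound of Ω: every t ∈ Ω satisfies t ≤ σ. -/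
open Matrix Polynomial

lemma mul_pos_coeff (p q : Polynomial ℝ) (hp : p ≠ 0) (hq : q ≠ 0)
    (hpc : ∀ i ≤ p.natDegree, 0 < p.coeff i) (hqc : ∀ i ≤ q.natDegree, 0 < q.coeff i) :
    ∀ k ≤ (p * q).natDegree, 0 < (p * q).coeff k := by
  intro k hk
  rw [Polynomial.natDegree_mul hp hq] at hk
  rw [Polynomial.coeff_mul]
  apply Finset.sum_pos'
  · rintro ⟨i, j⟩ hij
    by_cases hi : i ≤ p.natDegree
    · by_cases hj : j ≤ q.natDegree
      · exact le_of_lt (mul_pos (hpc i hi) (hqc j hj))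
      · rw [Polynomial.coeff_eq_zero_of_natDegree_lt (lt_of_not_ge hj), mul_zero]
    · rw [Polynomial.coeff_eq_zero_of_natDegree_lt (lt_of_not_ge hi), zero_mul]
  · refine ⟨(min k p.natDegree, k - min k p.natDegree), ?_, ?_⟩
    · simp [Finset.mem_antidiagonal, Nat.add_sub_cancel' (min_le_left k p.natDegree)]
    · have hj : k - min k p.natDegree ≤ q.natDegree := by omega
      exact mul_pos (hpc _ (min_le_right _ _)) (hqc _ hj)


lemma quad_facts (b c : ℝ) :
    (X ^ 2 - C b * X + C c : Polynomial ℝ).coeff 0 = c ∧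
    (X ^ 2 - C b * X + C c : Polynomial ℝ).coeff 1 = -b ∧
    (X ^ 2 - C b * X + C c : Polynomial ℝ).coeff 2 = 1 ∧
    (X ^ 2 - C b * X + C c : Polynomial ℝ).natDegree = 2 ∧
    (X ^ 2 - C b * X + C c : Polynomial ℝ).Monic := by
  have heq : (X ^ 2 - C b * X + C c : Polynomial ℝ) =
      C (1:ℝ) * X ^ 2 + C (-b) * X + C c := by
    rw [Polynomial.C_1, one_mul, Polynomial.C_neg]; ring
  have hdeg : (X ^ 2 - C b * X + C c : Polynomial ℝ).natDegree = 2 := by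
    rw [heq]; exact Polynomial.natDegree_quadratic one_ne_zero
  refine ⟨?_, ?_, ?_, hdeg, ?_⟩
  · simp only [Polynomial.coeff_add, Polynomial.coeff_sub, Polynomial.coeff_X_pow,
      Polynomial.coeff_C_mul, Polynomial.coeff_X, Polynomial.coeff_C]
    norm_num
  · simp only [Polynomial.coeff_add, Polynomial.coeff_sub, Polynomial.coeff_X_pow,
      Polynomial.coeff_C_mul, Polynomial.coeff_X, Polynomial.coeff_C]
    norm_num
  · simp only [Polynomial.coeff_add, Polynomial.coeff_sub, Polynomial.coeff_X_pow,
      Polynomial.coeff_C_mul, Polynomial.coeff_X, Polynomial.coeff_C]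
    norm_num
  · unfold Polynomial.Monic Polynomial.leadingCoeff
    rw [hdeg]
    simp only [Polynomial.coeff_add, Polynomial.coeff_sub, Polynomial.coeff_X_pow,
      Polynomial.coeff_C_mul, Polynomial.coeff_X, Polynomial.coeff_C]
    norm_num


lemma hurwitz_pos : ∀ N : ℕ, ∀ p : Polynomial ℝ, p.natDegree = N → p.Monic →
    (∀ z : ℂ, (p.map (algebraMap ℝ ℂ)).IsRoot z → z.re < 0) →
    ∀ i ≤ p.natDegree, 0 < p.coeff i := by
  intro N
  induction N using Nat.strong_induction_on with
  | _ N ih =>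
  intro p hdeg hmon hroots i hi
  rcases Nat.eq_zero_or_pos N with h0 | hpos
  · subst h0
    rw [hdeg] at hi
    have hi0 : i = 0 := by omega
    have hc := hmon.coeff_natDegree
    rw [hdeg] at hc
    rw [hi0, hc]
    norm_num
  · -- p has a complex root
    have hpm : (p.map (algebraMap ℝ ℂ)).natDegree = N := by
      rw [Polynomial.natDegree_map, hdeg]
    have hne : (p.map (algebraMap ℝ ℂ)).degree ≠ 0 := by
      rw [Polynomial.degree_eq_natDegree (by
        intro h; rw [h] at hpm; simp at hpm; omega), hpm]
      exact_mod_cast (by omega : (N : ℕ) ≠ 0) ∘ (by exact_mod_cast ·)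
    obtain ⟨z, hz⟩ := Complex.isAlgClosed.exists_root _ hne
    have hzre : z.re < 0 := hroots z hz
    -- obtain a monic divisor with positive coefficients
    obtain ⟨d, hdm, hddvd, hddeg, hdcoef⟩ :
        ∃ d : Polynomial ℝ, d.Monic ∧ d ∣ p ∧ 1 ≤ d.natDegree ∧
          ∀ j ≤ d.natDegree, 0 < d.coeff j := by
      by_cases him : z.im = 0
      · refine ⟨X - C z.re, monic_X_sub_C _, ?_, ?_, ?_⟩
        · apply Polynomial.dvd_iff_isRoot.mpr
          have hz' : z = ((z.re : ℝ) : ℂ) := by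
            apply Complex.ext <;> simp [him]
          rw [hz'] at hz
          have h2 : (algebraMap ℝ ℂ) (p.eval z.re) = 0 := by
            rw [← Polynomial.eval₂_at_apply, ← Polynomial.eval_map]
            exact hz
          simpa using h2
        · rw [natDegree_X_sub_C]
        · intro j hj
          rw [natDegree_X_sub_C] at hj
          interval_cases j <;> simp <;> linarith
      · have h0 : aeval z p = 0 := by
          rw [Polynomial.aeval_def, ← Polynomial.eval_map]
          exact hz
        obtain ⟨hc0, hc1, hc2, hnd, hm⟩ := quad_facts (2 * z.re) (‖z‖ ^ 2)
        refine ⟨X ^ 2 - C (2 * z.re) * X + C (‖z‖ ^ 2), hm, ?_, by omega, ?_⟩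
        · exact Polynomial.quadratic_dvd_of_aeval_eq_zero_im_ne_zero p h0 him
        · have hz0 : z ≠ 0 := fun h => him (by rw [h]; rfl)
          have hnorm : 0 < ‖z‖ ^ 2 := pow_pos (norm_pos_iff.mpr hz0) 2
          intro j hj
          rw [hnd] at hj
          interval_cases j
          · rw [hc0]; exact hnorm
          · rw [hc1]; linarith
          · rw [hc2]; norm_num
    -- split p = d * q and apply induction
    set q := p /ₘ d with hqdef
    have hmod : p %ₘ d = 0 := (Polynomial.modByMonic_eq_zero_iff_dvd hdm).mpr hddvd
    have hpq : p = d * q := by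
      have := Polynomial.modByMonic_add_div p d
      rw [hmod, zero_add] at this
      exact this.symm
    have hp0 : p ≠ 0 := hmon.ne_zero
    have hq0 : q ≠ 0 := by
      intro h
      rw [h, mul_zero] at hpq
      exact hp0 hpq
    have hqm : q.Monic := hdm.of_mul_monic_left (hpq ▸ hmon)
    have hdeg' : d.natDegree + q.natDegree = N := by
      rw [← hdeg, hpq, Polynomial.natDegree_mul hdm.ne_zero hq0]
    have hqroots : ∀ w : ℂ, (q.map (algebraMap ℝ ℂ)).IsRoot w → w.re < 0 := by
      intro w hw
      apply hroots w
      show (p.map (algebraMap ℝ ℂ)).eval w = 0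
      rw [hpq, Polynomial.map_mul, Polynomial.eval_mul, hw, mul_zero]
    have hqpos := ih q.natDegree (by omega) q rfl hqm hqroots
    rw [hpq] at hi ⊢
    exact mul_pos_coeff d q hdm.ne_zero hq0 hdcoef hqpos i hi

theorem stmt_10 (n : ℕ) (hn : 1 ≤ n) (M : Matrix (Fin n) (Fin n) ℝ)
    (D : Matrix (Fin n) (Fin n) ℝ) (hD : D = Matrix.diagonal (fun i => M i i))
    (Ω : Set ℝ)
    (hΩ : Ω = {t : ℝ | ∃ i < n, (M + (t - 1) • D).charpoly.coeff i = 0})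
    (σ : ℝ)
    (hlt : ∀ σ' : ℝ, σ < σ' →
      ∀ z : ℂ, ((M + (σ' - 1) • D).charpoly.map (algebraMap ℝ ℂ)).IsRoot z →
        z.re < 0) :
    ∀ t ∈ Ω, t ≤ σ := by
  intro t ht
  by_contra hts
  push_neg at hts
  rw [hΩ] at ht
  obtain ⟨i, hi, hcoeff⟩ := ht
  have hmon := (M + (t - 1) • D).charpoly_monic
  have hdeg : (M + (t - 1) • D).charpoly.natDegree = n := by
    rw [Matrix.charpoly_natDegree_eq_dim, Fintype.card_fin]
  have hpos := hurwitz_pos n (M + (t - 1) • D).charpoly hdeg hmon (hlt t hts) i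
    (by rw [hdeg]; omega)
  exact absurd hcoeff (ne_of_gt hpos)
end
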